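/- Let a, b ∈ ℝ with b > 0, and let ρ₁(a,b) be the 6×6 matrix (1/(2(a²+b²))) · [[a²,0,0,0,ab,0],[0,b²,0,0,0,ab],[0,0,0,0,0,0],[0,0,0,0,0,0],[ab,0,0,0,b²,0],[0,ab,0,0,0,a²]], regarded as a 2⊗3 state. The eigenvalues of the partial transpose ρ₁(a,b)^Γ are a²/(2(a²+b²)), (b² + b√(b²+4a²))/(4(a²+b²)) and (b² − b√(b²+4a²))/(4(a²+b²)), each with multiplicity 2. In particular, for a ≠ 0, ρ₁(a,b)^Γ has exactly 2 negative eigenvalues (counted with multiplicity). -/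

import Mathlib

open Matrix BigOperators Polynomial
open scoped Kronecker ComplexOrder

noncomputable section

/-- Squared Hilbert–Schmidt norm `‖C‖² = Tr(CᴴC)`. -/
def hsNormSq {d : Type*} [Fintype d] (C : Matrix d d ℂ) : ℝ :=
  (Matrix.trace (Cᴴ * C)).re

/-- Trace norm `‖X‖₁ = Tr √(XᴴX)`. -/
def traceNorm {d : Type*} [Fintype d] [DecidableEq d] (X : Matrix d d ℂ) : ℝ :=
  (((Matrix.posSemidef_conjTranspose_mul_self X).1.eigenvectorUnitary : Matrix d d ℂ) *
      Matrix.diagonal (((↑) : ℝ → ℂ) ∘ (Real.sqrt ·) ∘ (Matrix.posSemidef_conjTranspose_mul_self X).1.eigenvalues) *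
      (star (Matrix.posSemidef_conjTranspose_mul_self X).1.eigenvectorUnitary : Matrix d d ℂ)).trace.re

/-- Partial transpose on the first factor: `ρ^Γ((i,k),(j,l)) = ρ((j,k),(i,l))`. -/
def ptranspose {m n : ℕ} (ρ : Matrix (Fin m × Fin n) (Fin m × Fin n) ℂ) :
    Matrix (Fin m × Fin n) (Fin m × Fin n) ℂ :=
  Matrix.of fun p q => ρ (q.1, p.2) (p.1, q.2)

/-- Negativity `N(ρ) = (‖ρ^Γ‖₁ - 1)/(m-1)`. -/
def negativity {m n : ℕ} (ρ : Matrix (Fin m × Fin n) (Fin m × Fin n) ℂ) : ℝ :=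
  (traceNorm (ptranspose ρ) - 1) / ((m : ℝ) - 1)

/-- `ψ` is an orthonormal basis of `ℂ^m` (an orthonormal family of `m` vectors). -/
def IsONB {m : ℕ} (ψ : Fin m → (Fin m → ℂ)) : Prop :=
  ∀ k l, (∑ i, star (ψ k i) * ψ l i) = if k = l then 1 else 0

/-- The rank-one projector `|v⟩⟨v|`. -/
def proj {m : ℕ} (v : Fin m → ℂ) : Matrix (Fin m) (Fin m) ℂ :=
  Matrix.vecMulVec v (fun j => star (v j))

/-- The von Neumann measurement map
`Π^A(ρ) = ∑ k, (|ψ_k⟩⟨ψ_k| ⊗ I_n) ρ (|ψ_k⟩⟨ψ_k| ⊗ I_n)`. -/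
def piA {m n : ℕ} (ψ : Fin m → (Fin m → ℂ))
    (ρ : Matrix (Fin m × Fin n) (Fin m × Fin n) ℂ) :
    Matrix (Fin m × Fin n) (Fin m × Fin n) ℂ :=
  ∑ k, (proj (ψ k) ⊗ₖ (1 : Matrix (Fin n) (Fin n) ℂ)) * ρ *
       (proj (ψ k) ⊗ₖ (1 : Matrix (Fin n) (Fin n) ℂ))

/-- Geometric discord
`D(ρ) = (m/(m-1)) · inf over von Neumann measurements of ‖ρ - Π^A(ρ)‖²`. -/
def gd {m n : ℕ} (ρ : Matrix (Fin m × Fin n) (Fin m × Fin n) ℂ) : ℝ :=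
  ((m : ℝ) / ((m : ℝ) - 1)) *
    ⨅ ψ : {ψ : Fin m → (Fin m → ℂ) // IsONB ψ}, hsNormSq (ρ - piA ψ.1 ρ)

/-- An `m ⊗ n` state: positive semidefinite with trace one. -/
def IsState {m n : ℕ} (ρ : Matrix (Fin m × Fin n) (Fin m × Fin n) ℂ) : Prop :=
  ρ.PosSemidef ∧ ρ.trace = 1

/-- Reindex a `6 × 6` matrix by `Fin 2 × Fin 3` with the ordering
`(1,1),(1,2),(1,3),(2,1),(2,2),(2,3)`. -/
def ofM6 (M : Matrix (Fin 6) (Fin 6) ℂ) :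
    Matrix (Fin 2 × Fin 3) (Fin 2 × Fin 3) ℂ :=
  Matrix.of fun p q =>
    M ⟨p.1.val * 3 + p.2.val, by have := p.1.isLt; have := p.2.isLt; omega⟩
      ⟨q.1.val * 3 + q.2.val, by have := q.1.isLt; have := q.2.isLt; omega⟩

/-- The family of states `ρ₁(a,b)`. -/
def rho1 (a b : ℝ) : Matrix (Fin 2 × Fin 3) (Fin 2 × Fin 3) ℂ :=
  ofM6 ((1 / (2 * ((a : ℂ)^2 + (b : ℂ)^2))) •
    !![(a:ℂ)^2, 0, 0, 0, (a:ℂ)*(b:ℂ), 0;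
       0, (b:ℂ)^2, 0, 0, 0, (a:ℂ)*(b:ℂ);
       0, 0, 0, 0, 0, 0;
       0, 0, 0, 0, 0, 0;
       (a:ℂ)*(b:ℂ), 0, 0, 0, (b:ℂ)^2, 0;
       0, (a:ℂ)*(b:ℂ), 0, 0, 0, (a:ℂ)^2])


-- Auxiliary lemmas ---------------------------------------------------------

private lemma s65 : (5 : Fin 6) = Fin.succ 4 := rfl
private lemma s64 : (4 : Fin 6) = Fin.succ 3 := rfl
private lemma s63 : (3 : Fin 6) = Fin.succ 2 := rfl
private lemma s62 : (2 : Fin 6) = Fin.succ 1 := rfl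
private lemma s61 : (1 : Fin 6) = Fin.succ 0 := rfl
private lemma s54 : (4 : Fin 5) = Fin.succ 3 := rfl
private lemma s53 : (3 : Fin 5) = Fin.succ 2 := rfl
private lemma s52 : (2 : Fin 5) = Fin.succ 1 := rfl
private lemma s51 : (1 : Fin 5) = Fin.succ 0 := rfl
private lemma s43 : (3 : Fin 4) = Fin.succ 2 := rfl
private lemma s42 : (2 : Fin 4) = Fin.succ 1 := rfl
private lemma s41 : (1 : Fin 4) = Fin.succ 0 := rfl
private lemma s32 : (2 : Fin 3) = Fin.succ 1 := rfl
private lemma s31 : (1 : Fin 3) = Fin.succ 0 := rfl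
private lemma s21 : (1 : Fin 2) = Fin.succ 0 := rfl

/-- The index equivalence `Fin 2 × Fin 3 ≃ Fin 6` matching `ofM6`. -/
def e23 : Fin 2 × Fin 3 ≃ Fin 6 where
  toFun p := ⟨p.1.val * 3 + p.2.val, by have := p.1.isLt; have := p.2.isLt; omega⟩
  invFun i := (⟨i.val / 3, by have := i.isLt; omega⟩, ⟨i.val % 3, by have := i.isLt; omega⟩)
  left_inv := by decide
  right_inv := by decide

/-- The partial transpose of `rho1 a b`, as an explicit `6 × 6` matrix. -/
def M6pt (a b : ℝ) : Matrix (Fin 6) (Fin 6) ℂ :=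
  (1 / (2 * ((a : ℂ)^2 + (b : ℂ)^2))) •
    !![(a:ℂ)^2, 0, 0, 0, 0, 0;
       0, (b:ℂ)^2, 0, (a:ℂ)*(b:ℂ), 0, 0;
       0, 0, 0, 0, (a:ℂ)*(b:ℂ), 0;
       0, (a:ℂ)*(b:ℂ), 0, 0, 0, 0;
       0, 0, (a:ℂ)*(b:ℂ), 0, (b:ℂ)^2, 0;
       0, 0, 0, 0, 0, (a:ℂ)^2]

set_option maxHeartbeats 4000000 in
lemma ptranspose_rho1_eq (a b : ℝ) :
    ptranspose (rho1 a b) = (M6pt a b).submatrix e23 e23 := by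
  ext ⟨i, k⟩ ⟨j, l⟩
  fin_cases i <;> fin_cases k <;> fin_cases j <;> fin_cases l <;>
    simp [ptranspose, rho1, ofM6, M6pt, e23, s65, s64, s63, s62, s61, s54, s53, s52, s51,
      s43, s42, s41, s32, s31, s21, Matrix.cons_val_succ, Matrix.vecHead, Matrix.vecTail]

lemma charmatrix_map_eval {n : Type*} [Fintype n] [DecidableEq n] (M : Matrix n n ℂ) (x : ℂ) :
    (charmatrix M).map (evalRingHom x) = x • (1 : Matrix n n ℂ) - M := by
  ext i j
  by_cases h : i = j
  · subst h; simp [charmatrix_apply_eq]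
  · simp [charmatrix_apply_ne _ _ _ h, Matrix.one_apply_ne h]

set_option maxHeartbeats 4000000 in
set_option maxRecDepth 8000 in
lemma smul_sub_M6pt (a b : ℝ) (x : ℂ) :
    x • (1 : Matrix (Fin 6) (Fin 6) ℂ) - M6pt a b =
    !![x - (a:ℂ)^2/(2*((a:ℂ)^2+(b:ℂ)^2)), 0, 0, 0, 0, 0;
       0, x - (b:ℂ)^2/(2*((a:ℂ)^2+(b:ℂ)^2)), 0, -((a:ℂ)*(b:ℂ)/(2*((a:ℂ)^2+(b:ℂ)^2))), 0, 0;
       0, 0, x, 0, -((a:ℂ)*(b:ℂ)/(2*((a:ℂ)^2+(b:ℂ)^2))), 0;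
       0, -((a:ℂ)*(b:ℂ)/(2*((a:ℂ)^2+(b:ℂ)^2))), 0, x, 0, 0;
       0, 0, -((a:ℂ)*(b:ℂ)/(2*((a:ℂ)^2+(b:ℂ)^2))), 0, x - (b:ℂ)^2/(2*((a:ℂ)^2+(b:ℂ)^2)), 0;
       0, 0, 0, 0, 0, x - (a:ℂ)^2/(2*((a:ℂ)^2+(b:ℂ)^2))] := by
  ext i j
  fin_cases i <;> fin_cases j <;>
    simp [M6pt, Matrix.one_apply, s65, s64, s63, s62, s61, s54, s53, s52, s51,
      s43, s42, s41, s32, s31, s21, Matrix.cons_val_succ, Matrix.vecHead, Matrix.vecTail,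
      div_eq_mul_inv, Fin.ext_iff] <;> ring

set_option maxHeartbeats 4000000 in
set_option maxRecDepth 8000 in
lemma det_M6pt (a b : ℝ) (x : ℂ) :
    (x • (1 : Matrix (Fin 6) (Fin 6) ℂ) - M6pt a b).det =
      ((x - (a:ℂ)^2/(2*((a:ℂ)^2+(b:ℂ)^2)))^2 *
       ((x - (b:ℂ)^2/(2*((a:ℂ)^2+(b:ℂ)^2))) * x - ((a:ℂ)*(b:ℂ)/(2*((a:ℂ)^2+(b:ℂ)^2)))^2)^2) := by
  rw [smul_sub_M6pt]
  simp [Matrix.det_succ_row_zero, Fin.sum_univ_succ, Fin.succAbove]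
  ring

lemma key_bg (a b : ℝ) (hA : ((a:ℂ)^2+(b:ℂ)^2) ≠ 0)
    (hr : ((Real.sqrt (b^2+4*a^2) : ℝ) : ℂ)^2 = (b:ℂ)^2 + 4*(a:ℂ)^2) (x : ℂ) :
    (x - (((b^2 + b*Real.sqrt (b^2+4*a^2))/(4*(a^2+b^2)) : ℝ):ℂ)) *
    (x - (((b^2 - b*Real.sqrt (b^2+4*a^2))/(4*(a^2+b^2)) : ℝ):ℂ)) =
    (x - (b:ℂ)^2/(2*((a:ℂ)^2+(b:ℂ)^2))) * x - ((a:ℂ)*(b:ℂ)/(2*((a:ℂ)^2+(b:ℂ)^2)))^2 := by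
  push_cast
  field_simp
  linear_combination (-4*(b:ℂ)^2) * hr

lemma charpoly_M6pt (a b : ℝ) (hb : 0 < b) :
    (M6pt a b).charpoly =
      ((X - C ((a ^ 2 / (2 * (a ^ 2 + b ^ 2)) : ℝ) : ℂ)) *
       (X - C (((b ^ 2 + b * Real.sqrt (b ^ 2 + 4 * a ^ 2)) /
          (4 * (a ^ 2 + b ^ 2)) : ℝ) : ℂ)) *
       (X - C (((b ^ 2 - b * Real.sqrt (b ^ 2 + 4 * a ^ 2)) /
          (4 * (a ^ 2 + b ^ 2)) : ℝ) : ℂ))) ^ 2 := by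
  have hA : ((a:ℂ)^2+(b:ℂ)^2) ≠ 0 := by
    have h0 : (0:ℝ) < a^2 + b^2 := by positivity
    intro h
    rw [show ((a:ℂ)^2+(b:ℂ)^2) = ((a^2+b^2 : ℝ) : ℂ) by push_cast; ring] at h
    exact h0.ne' (by exact_mod_cast h)
  have hr : ((Real.sqrt (b^2+4*a^2) : ℝ) : ℂ)^2 = (b:ℂ)^2 + 4*(a:ℂ)^2 := by
    rw [← Complex.ofReal_pow, Real.sq_sqrt (by positivity)]
    push_cast; ring
  apply Polynomial.funext
  intro x
  simp only [eval_pow, eval_mul, eval_sub, eval_X, eval_C]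
  rw [Matrix.charpoly, ← coe_evalRingHom, RingHom.map_det, RingHom.mapMatrix_apply,
    charmatrix_map_eval, det_M6pt]
  rw [mul_assoc, key_bg a b hA hr x]
  push_cast
  field_simp

lemma charpoly_conj {n : Type*} [Fintype n] [DecidableEq n]
    (U D V : Matrix n n ℂ) (hUV : U * V = 1) (hVU : V * U = 1) :
    (U * D * V).charpoly = D.charpoly := by
  unfold Matrix.charpoly
  have h1 : charmatrix (U * D * V) =
      (C : ℂ →+* ℂ[X]).mapMatrix U * charmatrix D * (C : ℂ →+* ℂ[X]).mapMatrix V := by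
    unfold charmatrix
    rw [mul_sub, sub_mul, _root_.map_mul, _root_.map_mul]
    congr 1
    have hc : Commute (Matrix.scalar n (X : ℂ[X])) ((C : ℂ →+* ℂ[X]).mapMatrix V) :=
      Matrix.scalar_commute _ (fun r' => Commute.all _ _) _
    rw [mul_assoc, hc.eq, ← mul_assoc, ← _root_.map_mul, hUV, _root_.map_one, one_mul]
  have h2 : (C : ℂ →+* ℂ[X]).mapMatrix V * (C : ℂ →+* ℂ[X]).mapMatrix U = 1 := by
    rw [← _root_.map_mul, hVU, _root_.map_one]
  rw [h1, Matrix.det_mul, Matrix.det_mul, mul_comm, ← mul_assoc, ← Matrix.det_mul, h2]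
  simp

lemma charpoly_diagonal {n : Type*} [Fintype n] [DecidableEq n] (d : n → ℂ) :
    (Matrix.diagonal d).charpoly = ∏ i, (X - C (d i)) := by
  unfold Matrix.charpoly
  have : charmatrix (Matrix.diagonal d) = Matrix.diagonal fun i => X - C (d i) := by
    ext i j
    by_cases h : i = j
    · subst h; simp
    · simp [charmatrix_apply_ne _ _ _ h, Matrix.diagonal_apply_ne _ h]
  rw [this, det_diagonal]

lemma charpoly_hermitian {n : Type*} [Fintype n] [DecidableEq n]
    {A : Matrix n n ℂ} (hA : A.IsHermitian) :
    A.charpoly = ∏ i, (X - C ((hA.eigenvalues i : ℝ) : ℂ)) := by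
  conv_lhs => rw [hA.spectral_theorem]
  rw [Unitary.conjStarAlgAut_apply]
  rw [charpoly_conj _ _ _ (Matrix.mem_unitaryGroup_iff.mp (hA.eigenvectorUnitary).2)
      (Matrix.mem_unitaryGroup_iff'.mp (hA.eigenvectorUnitary).2),
    _root_.charpoly_diagonal]
  rfl

set_option maxRecDepth 8000 in
theorem stmt9 (a b : ℝ) (hb : 0 < b) :
    (ptranspose (rho1 a b)).charpoly =
      ((X - C ((a ^ 2 / (2 * (a ^ 2 + b ^ 2)) : ℝ) : ℂ)) *
       (X - C (((b ^ 2 + b * Real.sqrt (b ^ 2 + 4 * a ^ 2)) /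
          (4 * (a ^ 2 + b ^ 2)) : ℝ) : ℂ)) *
       (X - C (((b ^ 2 - b * Real.sqrt (b ^ 2 + 4 * a ^ 2)) /
          (4 * (a ^ 2 + b ^ 2)) : ℝ) : ℂ))) ^ 2 ∧
    (a ≠ 0 → ∀ h : (ptranspose (rho1 a b)).IsHermitian,
      (Finset.univ.filter fun i => h.eigenvalues i < 0).card = 2) := by
  have hsub : ptranspose (rho1 a b) = (M6pt a b).submatrix e23 e23 := ptranspose_rho1_eq a b
  have hcp : (ptranspose (rho1 a b)).charpoly = (M6pt a b).charpoly := by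
    rw [hsub,
      show (M6pt a b).submatrix e23 e23 = Matrix.reindex e23.symm e23.symm (M6pt a b) from rfl,
      Matrix.charpoly_reindex]
  have part1 : (ptranspose (rho1 a b)).charpoly =
      ((X - C ((a ^ 2 / (2 * (a ^ 2 + b ^ 2)) : ℝ) : ℂ)) *
       (X - C (((b ^ 2 + b * Real.sqrt (b ^ 2 + 4 * a ^ 2)) /
          (4 * (a ^ 2 + b ^ 2)) : ℝ) : ℂ)) *
       (X - C (((b ^ 2 - b * Real.sqrt (b ^ 2 + 4 * a ^ 2)) /
          (4 * (a ^ 2 + b ^ 2)) : ℝ) : ℂ))) ^ 2 := hcp.trans (charpoly_M6pt a b hb)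
  refine ⟨part1, ?_⟩
  intro ha h
  set α' : ℝ := a ^ 2 / (2 * (a ^ 2 + b ^ 2)) with hα'
  set β' : ℝ := (b ^ 2 + b * Real.sqrt (b ^ 2 + 4 * a ^ 2)) / (4 * (a ^ 2 + b ^ 2)) with hβ'
  set γ' : ℝ := (b ^ 2 - b * Real.sqrt (b ^ 2 + 4 * a ^ 2)) / (4 * (a ^ 2 + b ^ 2)) with hγ'
  set m1 : Multiset ℝ := Multiset.map h.eigenvalues Finset.univ.val with hm1
  set m2 : Multiset ℝ := (α' ::ₘ β' ::ₘ γ' ::ₘ α' ::ₘ β' ::ₘ γ' ::ₘ 0) with hm2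
  have hprod1 : ((m1.map (fun r : ℝ => (r:ℂ))).map (fun z : ℂ => X - C z)).prod
      = (ptranspose (rho1 a b)).charpoly := by
    rw [charpoly_hermitian h, Finset.prod_eq_multiset_prod]
    simp [hm1, Multiset.map_map, Function.comp]
  have hprod2 : ((m2.map (fun r : ℝ => (r:ℂ))).map (fun z : ℂ => X - C z)).prod
      = (ptranspose (rho1 a b)).charpoly := by
    rw [part1, hm2]
    simp only [Multiset.map_cons, Multiset.map_zero, Multiset.prod_cons, Multiset.prod_zero]
    ring
  have hroots : m1.map (fun r : ℝ => (r:ℂ)) = m2.map (fun r : ℝ => (r:ℂ)) := by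
    rw [← Polynomial.roots_multiset_prod_X_sub_C (m1.map (fun r : ℝ => (r:ℂ))),
      ← Polynomial.roots_multiset_prod_X_sub_C (m2.map (fun r : ℝ => (r:ℂ))), hprod1, hprod2]
  have hm : m1 = m2 := Multiset.map_injective Complex.ofReal_injective hroots
  have hsq : Real.sqrt (b ^ 2 + 4 * a ^ 2) ^ 2 = b ^ 2 + 4 * a ^ 2 :=
    Real.sq_sqrt (by positivity)
  have hαpos : ¬ (α' < 0) := by
    rw [hα']; push_neg; positivity
  have hβpos : ¬ (β' < 0) := by
    rw [hβ']; push_neg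
    have : (0:ℝ) ≤ Real.sqrt (b ^ 2 + 4 * a ^ 2) := Real.sqrt_nonneg _
    positivity
  have hγneg : γ' < 0 := by
    rw [hγ']
    apply div_neg_of_neg_of_pos _ (by positivity)
    have h1 : b < Real.sqrt (b ^ 2 + 4 * a ^ 2) := by
      nlinarith [Real.sqrt_nonneg (b ^ 2 + 4 * a ^ 2), hsq, mul_self_pos.mpr ha]
    nlinarith
  have hcount : (Finset.univ.filter fun i => h.eigenvalues i < 0).card
      = Multiset.countP (fun r : ℝ => r < 0) m1 := by
    rw [hm1, Multiset.countP_map]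
    rfl
  rw [hcount, hm, hm2]
  simp only [Multiset.countP_cons, Multiset.countP_zero]
  simp [hαpos, hβpos, hγneg]

end
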